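/- Theorem 3: Assume (A1)–(A3), (A5) and the MSM. Then θ_sw^(m) − θ_rsw^(m) = Σ_{j=m+1}^{K} ψ_j q_j. -/

import Mathlib

open MeasureTheory Finset
open scoped Classical

namespace MSMPaper

noncomputable section

variable {Ω : Type*} [MeasurableSpace Ω] {𝓛 : Type*}

/-- Conditional probability `P(E | F) = P(E ∩ F) / P(F)` as a real number
(junk value `0` when `P F = 0`). -/
def cP (P : Measure Ω) (E F : Set Ω) : ℝ := (P (E ∩ F)).toReal / (P F).toReal

variable {K : ℕ}

/-- Event `Ā(t−1) = b̄` (treatment history up to, not including, time `t`). -/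
def Apast (A : Fin K → Ω → Bool) (t : ℕ) (b : Fin K → Bool) : Set Ω :=
  {ω | ∀ k : Fin K, (k : ℕ) < t → A k ω = b k}

/-- Event `L̄(t) = l̄` (covariate history up to and including time `t`). -/
def Lpast (L : Fin K → Ω → 𝓛) (t : ℕ) (l : Fin K → 𝓛) : Set Ω :=
  {ω | ∀ k : Fin K, (k : ℕ) ≤ t → L k ω = l k}

/-- Event `A̲(s, t−1) = b` (treatment history from time `s` up to, not including, `t`). -/
def Aseg (A : Fin K → Ω → Bool) (s t : ℕ) (b : Fin K → Bool) : Set Ω :=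
  {ω | ∀ k : Fin K, s ≤ (k : ℕ) → (k : ℕ) < t → A k ω = b k}

/-- Event `A̲(K−m) = a̲` for a (last-`m`) treatment vector `as`. -/
def EtrV (A : Fin K → Ω → Bool) (m : ℕ) (as : Fin K → Bool) : Set Ω :=
  {ω | ∀ k : Fin K, K - m ≤ (k : ℕ) → A k ω = as k}

/-- Event `A̲(K−m) = a_m` (constant `a` on the last `m` coordinates). -/
def Etr (A : Fin K → Ω → Bool) (m : ℕ) (a : Bool) : Set Ω :=
  EtrV A m (fun _ => a)

/-- Stabilized weights `W_sw`. -/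
def Wsw (P : Measure Ω) (A : Fin K → Ω → Bool) (L : Fin K → Ω → 𝓛) : Ω → ℝ :=
  fun ω => ∏ k : Fin K,
    cP P {ω' | A k ω' = A k ω} (Apast A (k : ℕ) (fun j => A j ω)) /
      cP P {ω' | A k ω' = A k ω}
        (Lpast L (k : ℕ) (fun j => L j ω) ∩ Apast A (k : ℕ) (fun j => A j ω))

/-- Restricted stabilized weights `W_rsw^(m)`. -/
def Wrsw (P : Measure Ω) (A : Fin K → Ω → Bool) (L : Fin K → Ω → 𝓛) (m : ℕ) : Ω → ℝ :=
  fun ω => ∏ k ∈ Finset.univ.filter (fun k : Fin K => K - m ≤ (k : ℕ)),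
    cP P {ω' | A k ω' = A k ω} (Aseg A (K - m) (k : ℕ) (fun j => A j ω)) /
      cP P {ω' | A k ω' = A k ω}
        (Lpast L (k : ℕ) (fun j => L j ω) ∩ Apast A (k : ℕ) (fun j => A j ω))

/-- Partial stabilized weights `W_psw^(m)`. -/
def Wpsw (P : Measure Ω) (A : Fin K → Ω → Bool) (L : Fin K → Ω → 𝓛) (m : ℕ) : Ω → ℝ :=
  fun ω => ∏ k ∈ Finset.univ.filter (fun k : Fin K => K - m ≤ (k : ℕ)),
    cP P {ω' | A k ω' = A k ω} (Apast A (k : ℕ) (fun j => A j ω)) /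
      cP P {ω' | A k ω' = A k ω}
        (Lpast L (k : ℕ) (fun j => L j ω) ∩ Apast A (k : ℕ) (fun j => A j ω))

/-- IP-weighted contrast `θ_W^(m)`. -/
def θW (P : Measure Ω) (A : Fin K → Ω → Bool) (m : ℕ) (W Y : Ω → ℝ) : ℝ :=
  (∫ ω in Etr A m true, W ω * Y ω ∂P) / (∫ ω in Etr A m true, W ω ∂P) -
    (∫ ω in Etr A m false, W ω * Y ω ∂P) / (∫ ω in Etr A m false, W ω ∂P)

/-- `rev j` is the time index `K − 1 − j`; the paper's coefficient `ψ_{j+1}`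
multiplies `a(K − (j+1)) = a(rev j)`. -/
def rev (j : Fin K) : Fin K := ⟨K - 1 - (j : ℕ), by have := j.isLt; omega⟩

/-- `θ^(K) = 𝔼[Y^{1_K}] − 𝔼[Y^{0_K}]`. -/
def θKfull (P : Measure Ω) (Ypot : (Fin K → Bool) → Ω → ℝ) : ℝ :=
  (∫ ω, Ypot (fun _ => true) ω ∂P) - ∫ ω, Ypot (fun _ => false) ω ∂P

/-- (A1) consistency. -/
def A1ok (A : Fin K → Ω → Bool) (Y : Ω → ℝ) (Ypot : (Fin K → Bool) → Ω → ℝ) : Prop :=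
  ∀ (a : Fin K → Bool) (ω : Ω), (∀ k, A k ω = a k) → Y ω = Ypot a ω

/-- (A2) sequential exchangeability. -/
def A2ok (P : Measure Ω) (A : Fin K → Ω → Bool) (L : Fin K → Ω → 𝓛)
    (Ypot : (Fin K → Bool) → Ω → ℝ) : Prop :=
  ∀ (t : Fin K) (a : Fin K → Bool) (B : Set ℝ), MeasurableSet B →
    ∀ (av : Bool) (l : Fin K → 𝓛) (b : Fin K → Bool),
      0 < P (Lpast L (t : ℕ) l ∩ Apast A (t : ℕ) b) →
      cP P ({ω | Ypot a ω ∈ B} ∩ {ω | A t ω = av}) (Lpast L (t : ℕ) l ∩ Apast A (t : ℕ) b) =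
        cP P {ω | Ypot a ω ∈ B} (Lpast L (t : ℕ) l ∩ Apast A (t : ℕ) b) *
          cP P {ω | A t ω = av} (Lpast L (t : ℕ) l ∩ Apast A (t : ℕ) b)

/-- (A3) positivity. -/
def A3ok (P : Measure Ω) (A : Fin K → Ω → Bool) (L : Fin K → Ω → 𝓛) : Prop :=
  ∀ (t : Fin K) (av : Bool) (l : Fin K → 𝓛) (b : Fin K → Bool),
    0 < P (Lpast L (t : ℕ) l ∩ Apast A (t : ℕ) b) →
    0 < cP P {ω | A t ω = av} (Lpast L (t : ℕ) l ∩ Apast A (t : ℕ) b)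

/-- The marginal structural model `𝔼[Y^{ā}] = ψ₀ + Σ_{j=1}^K ψ_j a(K−j)`;
here `ψ j` is the paper's `ψ_{j+1}`, the coefficient of `a(K−1−j)`. -/
def MSMeq (P : Measure Ω) (Ypot : (Fin K → Bool) → Ω → ℝ) (ψ0 : ℝ) (ψ : Fin K → ℝ) : Prop :=
  ∀ a : Fin K → Bool,
    (∫ ω, Ypot a ω ∂P) = ψ0 + ∑ j : Fin K, ψ j * (if a (rev j) = true then 1 else 0)

/-- (A5) conditional MSM given the past treatment history `Ā(K−m−1)`. -/
def A5ok (P : Measure Ω) (A : Fin K → Ω → Bool) (Ypot : (Fin K → Bool) → Ω → ℝ)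
    (m : ℕ) : Prop :=
  ∀ b : Fin K → Bool, 0 < P (Apast A (K - m) b) →
    ∃ (φ0 : ℝ) (φ : Fin K → ℝ), ∀ a : Fin K → Bool,
      (∫ ω in Apast A (K - m) b, Ypot a ω ∂P) / (P (Apast A (K - m) b)).toReal =
        φ0 + ∑ j : Fin K, φ j * (if a (rev j) = true then 1 else 0)

/-- `q_{j+1} = P(A(K−1−j)=1 | A̲(K−m)=1_m) − P(A(K−1−j)=1 | A̲(K−m)=0_m)`. -/
def qcoef (P : Measure Ω) (A : Fin K → Ω → Bool) (m : ℕ) (j : Fin K) : ℝ :=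
  cP P {ω | A (rev j) ω = true} (Etr A m true) -
    cP P {ω | A (rev j) ω = true} (Etr A m false)

-- ==================== helper lemmas ====================

section Meas
variable [MeasurableSpace 𝓛] [MeasurableSingletonClass 𝓛]
variable {A : Fin K → Ω → Bool} {L : Fin K → Ω → 𝓛}

lemma measSet_A (hA : ∀ k, Measurable (A k)) (k : Fin K) (v : Bool) :
    MeasurableSet {ω | A k ω = v} := hA k (measurableSet_singleton v)

lemma measSet_Apast (hA : ∀ k, Measurable (A k)) (t : ℕ) (b : Fin K → Bool) :
    MeasurableSet (Apast A t b) := by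
  have : Apast A t b = ⋂ k : Fin K, ⋂ _h : (k : ℕ) < t, {ω | A k ω = b k} := by
    ext ω; simp [Apast]
  rw [this]
  exact MeasurableSet.iInter fun k => MeasurableSet.iInter fun _ => measSet_A hA k (b k)

lemma measSet_Lpast (hL : ∀ k, Measurable (L k)) (t : ℕ) (l : Fin K → 𝓛) :
    MeasurableSet (Lpast L t l) := by
  have : Lpast L t l = ⋂ k : Fin K, ⋂ _h : (k : ℕ) ≤ t, {ω | L k ω = l k} := by
    ext ω; simp [Lpast]
  rw [this]
  exact MeasurableSet.iInter fun k => MeasurableSet.iInter fun _ =>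
    hL k (measurableSet_singleton (l k))

lemma measSet_Aseg (hA : ∀ k, Measurable (A k)) (s t : ℕ) (b : Fin K → Bool) :
    MeasurableSet (Aseg A s t b) := by
  have : Aseg A s t b = ⋂ k : Fin K, ⋂ _h : s ≤ (k : ℕ), ⋂ _h : (k : ℕ) < t, {ω | A k ω = b k} := by
    ext ω; simp [Aseg]
  rw [this]
  exact .iInter fun k => .iInter fun _ => .iInter fun _ => measSet_A hA k (b k)

lemma measSet_EtrV (hA : ∀ k, Measurable (A k)) (m : ℕ) (as : Fin K → Bool) :
    MeasurableSet (EtrV A m as) := by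
  have : EtrV A m as = ⋂ k : Fin K, ⋂ _h : K - m ≤ (k : ℕ), {ω | A k ω = as k} := by
    ext ω; simp [EtrV]
  rw [this]
  exact .iInter fun k => .iInter fun _ => measSet_A hA k (as k)

lemma measSet_Etr (hA : ∀ k, Measurable (A k)) (m : ℕ) (a : Bool) :
    MeasurableSet (Etr A m a) := measSet_EtrV hA m _

end Meas

-- cP basics
lemma cP_nonneg (P : Measure Ω) (E F : Set Ω) : 0 ≤ cP P E F :=
  div_nonneg ENNReal.toReal_nonneg ENNReal.toReal_nonneg

lemma toReal_pos_of (P : Measure Ω) [IsFiniteMeasure P] {F : Set Ω} (h : 0 < P F) :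
    0 < (P F).toReal := ENNReal.toReal_pos h.ne' (measure_ne_top P F)

lemma cP_of_subset (P : Measure Ω) [IsFiniteMeasure P] {E F : Set Ω} (hFE : F ⊆ E)
    (h : 0 < P F) : cP P E F = 1 := by
  rw [cP, Set.inter_eq_self_of_subset_right hFE, div_self (toReal_pos_of P h).ne']

lemma cP_of_disjoint (P : Measure Ω) {E F : Set Ω} (h : E ∩ F = ∅) : cP P E F = 0 := by
  rw [cP, h]; simp

-- Partition lemma
lemma setIntegral_partition (P : Measure Ω) {ι : Type*} (s : Finset ι) (T : ι → Set Ω)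
    (S : Set Ω) (hS : MeasurableSet S) (hT : ∀ i ∈ s, MeasurableSet (T i))
    (hd : (↑s : Set ι).Pairwise (Function.onFun Disjoint T))
    (hcov : S ⊆ ⋃ i ∈ s, T i) (f : Ω → ℝ)
    (hint : ∀ i ∈ s, IntegrableOn f (S ∩ T i) P) :
    ∫ ω in S, f ω ∂P = ∑ i ∈ s, ∫ ω in S ∩ T i, f ω ∂P := by
  have hSeq : S = ⋃ i ∈ s, S ∩ T i := by
    apply Set.Subset.antisymm
    · intro ω hω
      obtain ⟨i, hi, hmem⟩ := Set.mem_iUnion₂.1 (hcov hω)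
      exact Set.mem_iUnion₂.2 ⟨i, hi, hω, hmem⟩
    · intro ω hω
      obtain ⟨i, _, h, _⟩ := Set.mem_iUnion₂.1 hω
      exact h
  calc ∫ ω in S, f ω ∂P = ∫ ω in ⋃ i ∈ s, S ∩ T i, f ω ∂P := by rw [← hSeq]
    _ = ∑ i ∈ s, ∫ ω in S ∩ T i, f ω ∂P := by
        refine integral_biUnion_finset s (fun i hi => hS.inter (hT i hi)) ?_ hint
        exact fun i hi j hj hij =>
          (hd hi hj hij).mono Set.inter_subset_right Set.inter_subset_right

-- measure version via f = 1
lemma measure_partition (P : Measure Ω) [IsFiniteMeasure P] {ι : Type*} (s : Finset ι)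
    (T : ι → Set Ω) (S : Set Ω) (hS : MeasurableSet S) (hT : ∀ i ∈ s, MeasurableSet (T i))
    (hd : (↑s : Set ι).Pairwise (Function.onFun Disjoint T))
    (hcov : S ⊆ ⋃ i ∈ s, T i) (hsub : ∀ i ∈ s, T i ⊆ S) :
    (P S).toReal = ∑ i ∈ s, (P (T i)).toReal := by
  have h := setIntegral_partition P s T S hS hT hd hcov (fun _ => (1 : ℝ))
    (fun i hi => integrableOn_const (measure_ne_top P _))
  simp only [integral_const, smul_eq_mul, mul_one, measureReal_def, Measure.restrict_apply_univ] at h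
  rw [h]
  exact Finset.sum_congr rfl fun i hi => by
    rw [Set.inter_eq_self_of_subset_right (hsub i hi)]
-- L1: factorization of set integrals from event-level independence
lemma integral_factor (P : Measure Ω) [IsFiniteMeasure P] {X : Ω → ℝ}
    (hXm : Measurable X) {T D : Set Ω} (hD : MeasurableSet D) (hDpos : 0 < P D)
    (hfac : ∀ B : Set ℝ, MeasurableSet B →
      cP P (X ⁻¹' B ∩ T) D = cP P (X ⁻¹' B) D * cP P T D) :
    ∫ ω in T ∩ D, X ω ∂P = cP P T D * ∫ ω in D, X ω ∂P := by
  set c := cP P T D with hc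
  have hc0 : 0 ≤ c := cP_nonneg P T D
  have hD0 : (P D).toReal ≠ 0 := (toReal_pos_of P hDpos).ne'
  have key : ∀ B : Set ℝ, MeasurableSet B →
      P (X ⁻¹' B ∩ (T ∩ D)) = ENNReal.ofReal c * P (X ⁻¹' B ∩ D) := by
    intro B hB
    have h := hfac B hB
    rw [cP, cP] at h
    have h2 : (P (X ⁻¹' B ∩ T ∩ D)).toReal = (P (X ⁻¹' B ∩ D)).toReal * c := by
      field_simp at h ⊢
      linarith [h]
    have h3 := congrArg ENNReal.ofReal h2
    rw [ENNReal.ofReal_toReal (measure_ne_top P _),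
      ENNReal.ofReal_mul' hc0,
      ENNReal.ofReal_toReal (measure_ne_top P _)] at h3
    rw [← Set.inter_assoc, h3, mul_comm]
  have hmap : Measure.map X (P.restrict (T ∩ D)) =
      ENNReal.ofReal c • Measure.map X (P.restrict D) := by
    ext B hB
    rw [Measure.map_apply hXm hB, Measure.restrict_apply (hXm hB), Measure.smul_apply,
      Measure.map_apply hXm hB, Measure.restrict_apply (hXm hB), smul_eq_mul]
    exact key B hB
  have hint : ∀ S : Set Ω, ∫ x, x ∂(Measure.map X (P.restrict S)) = ∫ ω in S, X ω ∂P :=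
    fun S => integral_map (f := fun y : ℝ => y) hXm.aemeasurable aestronglyMeasurable_id
  calc ∫ ω in T ∩ D, X ω ∂P
      = ∫ x, x ∂(Measure.map X (P.restrict (T ∩ D))) := (hint _).symm
    _ = ∫ x, x ∂(ENNReal.ofReal c • Measure.map X (P.restrict D)) := by rw [hmap]
    _ = c * ∫ x, x ∂(Measure.map X (P.restrict D)) := by
        rw [integral_smul_measure, ENNReal.toReal_ofReal hc0, smul_eq_mul]
    _ = c * ∫ ω in D, X ω ∂P := by rw [hint]
-- ============ observed-history rewriting ============
section Obs
variable {A : Fin K → Ω → Bool} {L : Fin K → Ω → 𝓛}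

lemma Lpast_obs_eq {ω : Ω} {t : ℕ} {l : Fin K → 𝓛} (hω : ω ∈ Lpast L t l)
    {k : ℕ} (hk : k ≤ t) : Lpast L k (fun j => L j ω) = Lpast L k l := by
  ext ω'
  simp only [Lpast, Set.mem_setOf_eq]
  exact forall_congr' fun j => forall_congr' fun hj => by rw [hω j (hj.trans hk)]

lemma Apast_obs_eq {ω : Ω} {t : ℕ} {b : Fin K → Bool} (hω : ω ∈ Apast A t b)
    {k : ℕ} (hk : k ≤ t) : Apast A k (fun j => A j ω) = Apast A k b := by
  ext ω'
  simp only [Apast, Set.mem_setOf_eq]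
  exact forall_congr' fun j => forall_congr' fun hj => by rw [hω j (hj.trans_le hk)]

end Obs

-- ============ the filtered index set and cells ============

def filt (K s t : ℕ) : Finset (Fin K) :=
  Finset.univ.filter fun k : Fin K => s ≤ (k : ℕ) ∧ (k : ℕ) < t

lemma filt_self (K s : ℕ) : filt K s s = ∅ := by
  ext k; simp only [filt, Finset.mem_filter, Finset.mem_univ, true_and,
    Finset.notMem_empty, iff_false, not_and, not_lt]; omega

lemma filt_succ {K t : ℕ} (s : ℕ) (hst : s ≤ t) (htK : t < K) :
    filt K s (t + 1) = insert ⟨t, htK⟩ (filt K s t) := by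
  ext k
  simp only [filt, Finset.mem_filter, Finset.mem_univ, true_and, Finset.mem_insert]
  constructor
  · rintro ⟨h1, h2⟩
    rcases Nat.lt_succ_iff_lt_or_eq.1 h2 with h | h
    · exact Or.inr ⟨h1, h⟩
    · exact Or.inl (Fin.ext h)
  · rintro (rfl | ⟨h1, h2⟩)
    · exact ⟨hst, Nat.lt_succ_self t⟩
    · exact ⟨h1, h2.trans (Nat.lt_succ_self t)⟩

lemma not_mem_filt {K t : ℕ} (s : ℕ) (htK : t < K) : (⟨t, htK⟩ : Fin K) ∉ filt K s t := by
  simp [filt]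

lemma Aseg_self (A : Fin K → Ω → Bool) (s : ℕ) (c : Fin K → Bool) :
    Aseg A s s c = Set.univ := by
  ext ω; simp only [Aseg, Set.mem_setOf_eq, Set.mem_univ, iff_true]
  intro k h1 h2; omega

/-- Denominator factor of the stabilized weights at time `k`, as a function of `ω`. -/
def eD (P : Measure Ω) (A : Fin K → Ω → Bool) (L : Fin K → Ω → 𝓛) (k : Fin K) (ω : Ω) : ℝ :=
  cP P {ω' | A k ω' = A k ω}
    (Lpast L (k : ℕ) (fun j => L j ω) ∩ Apast A (k : ℕ) (fun j => A j ω))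

section Cells
variable (𝓛 : Type*) [Fintype 𝓛] [Nonempty 𝓛]

/-- Canonical representatives of `(L̄(t), Ā(t−1))` histories. -/
def LReps (K t : ℕ) : Finset ((Fin K → 𝓛) × (Fin K → Bool)) :=
  (Finset.univ.filter fun l : Fin K → 𝓛 =>
      ∀ j : Fin K, ¬((j : ℕ) ≤ t) → l j = Classical.arbitrary 𝓛) ×ˢ
  (Finset.univ.filter fun b : Fin K → Bool => ∀ j : Fin K, ¬((j : ℕ) < t) → b j = false)

variable {𝓛}

def cellOf (L : Fin K → Ω → 𝓛) (A : Fin K → Ω → Bool) (t : ℕ)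
    (p : (Fin K → 𝓛) × (Fin K → Bool)) : Set Ω :=
  Lpast L t p.1 ∩ Apast A t p.2

lemma mem_LReps_iff {K t : ℕ} {p : (Fin K → 𝓛) × (Fin K → Bool)} :
    p ∈ LReps 𝓛 K t ↔ (∀ j : Fin K, ¬((j : ℕ) ≤ t) → p.1 j = Classical.arbitrary 𝓛) ∧
      (∀ j : Fin K, ¬((j : ℕ) < t) → p.2 j = false) := by
  simp [LReps, Finset.mem_product]

lemma cellOf_cover (L : Fin K → Ω → 𝓛) (A : Fin K → Ω → Bool) (t : ℕ) (ω : Ω) :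
    ∃ p ∈ LReps 𝓛 K t, ω ∈ cellOf L A t p := by
  refine ⟨(fun j => if (j : ℕ) ≤ t then L j ω else Classical.arbitrary 𝓛,
           fun j => if (j : ℕ) < t then A j ω else false), ?_, ?_, ?_⟩
  · rw [mem_LReps_iff]
    exact ⟨fun j hj => by simp [hj], fun j hj => by simp [hj]⟩
  · intro k hk; simp [hk]
  · intro k hk; simp [hk]

lemma cellOf_disjoint (L : Fin K → Ω → 𝓛) (A : Fin K → Ω → Bool) (t : ℕ) :
    (↑(LReps 𝓛 K t) : Set ((Fin K → 𝓛) × (Fin K → Bool))).Pairwise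
      (Function.onFun Disjoint (cellOf L A t)) := by
  intro p hp q hq hpq
  rw [Function.onFun, Set.disjoint_left]
  intro ω hωp hωq
  apply hpq
  rw [Finset.mem_coe, mem_LReps_iff] at hp hq
  obtain ⟨hωp1, hωp2⟩ := hωp
  obtain ⟨hωq1, hωq2⟩ := hωq
  have h1 : p.1 = q.1 := funext fun j => by
    by_cases hj : (j : ℕ) ≤ t
    · rw [← hωp1 j hj, hωq1 j hj]
    · rw [hp.1 j hj, hq.1 j hj]
  have h2 : p.2 = q.2 := funext fun j => by
    by_cases hj : (j : ℕ) < t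
    · rw [← hωp2 j hj, hωq2 j hj]
    · rw [hp.2 j hj, hq.2 j hj]
  exact Prod.ext h1 h2

lemma measSet_cellOf [MeasurableSpace 𝓛] [MeasurableSingletonClass 𝓛]
    {L : Fin K → Ω → 𝓛} {A : Fin K → Ω → Bool}
    (hA : ∀ k, Measurable (A k)) (hL : ∀ k, Measurable (L k)) (t : ℕ)
    (p : (Fin K → 𝓛) × (Fin K → Bool)) : MeasurableSet (cellOf L A t p) :=
  (measSet_Lpast hL t p.1).inter (measSet_Apast hA t p.2)

end Cells
-- ============ g-computation ============
section Gcomp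
variable [MeasurableSpace 𝓛] [MeasurableSingletonClass 𝓛] [Fintype 𝓛] [Nonempty 𝓛]
variable (P : Measure Ω) [IsProbabilityMeasure P]
variable (A : Fin K → Ω → Bool) (L : Fin K → Ω → 𝓛)

theorem gcomp_step
    (hA : ∀ k, Measurable (A k)) (hL : ∀ k, Measurable (L k)) (hA3 : A3ok P A L)
    (X : Ω → ℝ) (hXi : Integrable X P)
    (hfac : ∀ (t : Fin K) (av : Bool) (l : Fin K → 𝓛) (b : Fin K → Bool),
      0 < P (Lpast L (t : ℕ) l ∩ Apast A (t : ℕ) b) →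
      ∫ ω in {ω | A t ω = av} ∩ (Lpast L (t : ℕ) l ∩ Apast A (t : ℕ) b), X ω ∂P
        = cP P {ω | A t ω = av} (Lpast L (t : ℕ) l ∩ Apast A (t : ℕ) b) *
          ∫ ω in Lpast L (t : ℕ) l ∩ Apast A (t : ℕ) b, X ω ∂P)
    (c : Fin K → Bool) (s t : ℕ) (hst : s ≤ t) (htK : t < K) :
    ∫ ω in Apast A s c ∩ Aseg A s (t + 1) c,
        (∏ k ∈ filt K s (t + 1), (eD P A L k ω)⁻¹) * X ω ∂P
      = ∫ ω in Apast A s c ∩ Aseg A s t c,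
        (∏ k ∈ filt K s t, (eD P A L k ω)⁻¹) * X ω ∂P := by
  set tK : Fin K := ⟨t, htK⟩ with htk
  have hD1 : MeasurableSet (Apast A s c ∩ Aseg A s (t + 1) c) :=
    (measSet_Apast hA s c).inter (measSet_Aseg hA s (t + 1) c)
  have hD0 : MeasurableSet (Apast A s c ∩ Aseg A s t c) :=
    (measSet_Apast hA s c).inter (measSet_Aseg hA s t c)
  -- per-cell facts
  have key : ∀ p ∈ LReps 𝓛 K t,
      (IntegrableOn (fun ω => (∏ k ∈ filt K s (t + 1), (eD P A L k ω)⁻¹) * X ω)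
        ((Apast A s c ∩ Aseg A s (t + 1) c) ∩ cellOf L A t p) P) ∧
      (IntegrableOn (fun ω => (∏ k ∈ filt K s t, (eD P A L k ω)⁻¹) * X ω)
        ((Apast A s c ∩ Aseg A s t c) ∩ cellOf L A t p) P) ∧
      (∫ ω in (Apast A s c ∩ Aseg A s (t + 1) c) ∩ cellOf L A t p,
          (∏ k ∈ filt K s (t + 1), (eD P A L k ω)⁻¹) * X ω ∂P
        = ∫ ω in (Apast A s c ∩ Aseg A s t c) ∩ cellOf L A t p,
          (∏ k ∈ filt K s t, (eD P A L k ω)⁻¹) * X ω ∂P) := by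
    intro p hp
    by_cases hb : ∀ k : Fin K, (k : ℕ) < t → p.2 k = c k
    · -- compatible cell
      have hcell0 : (Apast A s c ∩ Aseg A s t c) ∩ cellOf L A t p = cellOf L A t p := by
        apply Set.inter_eq_self_of_subset_right
        intro ω hω
        have hA2' : ∀ k : Fin K, (k : ℕ) < t → A k ω = c k := fun k hk =>
          (hω.2 k hk).trans (hb k hk)
        exact ⟨fun k hk => hA2' k (hk.trans_le hst), fun k _ hk => hA2' k hk⟩
      have hcell1 : (Apast A s c ∩ Aseg A s (t + 1) c) ∩ cellOf L A t p
          = {ω | A tK ω = c tK} ∩ cellOf L A t p := by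
        ext ω
        constructor
        · rintro ⟨⟨h1, h2⟩, h3⟩
          exact ⟨h2 tK hst (Nat.lt_succ_self t), h3⟩
        · rintro ⟨h1, h2⟩
          have hA2' : ∀ k : Fin K, (k : ℕ) < t → A k ω = c k := fun k hk =>
            (h2.2 k hk).trans (hb k hk)
          refine ⟨⟨fun k hk => hA2' k (hk.trans_le hst), fun k hk hk' => ?_⟩, h2⟩
          rcases Nat.lt_succ_iff_lt_or_eq.1 hk' with h | h
          · exact hA2' k h
          · have : k = tK := Fin.ext h
            rw [this]; exact h1
      -- constants on the cell
      set Ek : Fin K → ℝ := fun k =>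
        cP P {ω' | A k ω' = p.2 k} (Lpast L (k : ℕ) p.1 ∩ Apast A (k : ℕ) p.2) with hEk
      set EkT : ℝ :=
        cP P {ω' | A tK ω' = c tK} (Lpast L t p.1 ∩ Apast A t p.2) with hEkT
      have heD : ∀ ω ∈ cellOf L A t p, ∀ k ∈ filt K s t, eD P A L k ω = Ek k := by
        intro ω hω k hk
        have hkt : (k : ℕ) < t := (Finset.mem_filter.1 hk).2.2
        have hAk : A k ω = p.2 k := hω.2 k hkt
        rw [eD, hAk, Lpast_obs_eq hω.1 hkt.le, Apast_obs_eq hω.2 hkt.le]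
      have heDt : ∀ ω ∈ {ω | A tK ω = c tK} ∩ cellOf L A t p, eD P A L tK ω = EkT := by
        intro ω hω
        have hAk : A tK ω = c tK := hω.1
        rw [eD, hAk, Lpast_obs_eq hω.2.1 (le_refl t), Apast_obs_eq hω.2.2 (le_refl t)]
      set C : ℝ := ∏ k ∈ filt K s t, (Ek k)⁻¹ with hC
      -- EqOn rewriting
      have heq1 : Set.EqOn (fun ω => (∏ k ∈ filt K s (t + 1), (eD P A L k ω)⁻¹) * X ω)
          (fun ω => (C * EkT⁻¹) * X ω) ({ω | A tK ω = c tK} ∩ cellOf L A t p) := by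
        intro ω hω
        simp only
        congr 1
        rw [filt_succ s hst htK, Finset.prod_insert (not_mem_filt s htK), heDt ω hω,
          Finset.prod_congr rfl (fun k hk => by rw [heD ω hω.2 k hk]), mul_comm]
      have heq0 : Set.EqOn (fun ω => (∏ k ∈ filt K s t, (eD P A L k ω)⁻¹) * X ω)
          (fun ω => C * X ω) (cellOf L A t p) := by
        intro ω hω
        simp only
        congr 1
        exact Finset.prod_congr rfl (fun k hk => by rw [heD ω hω k hk])
      have hmeascell := measSet_cellOf hA hL t p
      have hmeas1 : MeasurableSet ({ω | A tK ω = c tK} ∩ cellOf L A t p) :=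
        (measSet_A hA tK (c tK)).inter hmeascell
      -- integrability
      refine ⟨?_, ?_, ?_⟩
      · rw [hcell1]
        exact (((hXi.const_mul _).integrableOn).congr_fun (fun ω hω => (heq1 hω).symm) hmeas1)
      · rw [hcell0]
        exact (((hXi.const_mul _).integrableOn).congr_fun (fun ω hω => (heq0 hω).symm) hmeascell)
      · rw [hcell0, hcell1, setIntegral_congr_fun hmeas1 heq1,
          setIntegral_congr_fun hmeascell heq0, integral_const_mul, integral_const_mul]
        rcases eq_or_lt_of_le (zero_le : 0 ≤ P (cellOf L A t p)) with hzero | hpos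
        · have hz1 : ∫ ω in {ω | A tK ω = c tK} ∩ cellOf L A t p, X ω ∂P = 0 := by
            rw [Measure.restrict_eq_zero.mpr (le_antisymm
              (le_trans (measure_mono Set.inter_subset_right) hzero.symm.le) zero_le),
              integral_zero_measure]
          have hz0 : ∫ ω in cellOf L A t p, X ω ∂P = 0 := by
            rw [Measure.restrict_eq_zero.mpr hzero.symm, integral_zero_measure]
          rw [hz1, hz0, mul_zero, mul_zero]
        · have hfac' : ∫ ω in {ω | A tK ω = c tK} ∩ cellOf L A t p, X ω ∂P
              = EkT * ∫ ω in cellOf L A t p, X ω ∂P := hfac tK (c tK) p.1 p.2 hpos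
          have hEpos : (0:ℝ) < EkT := hA3 tK (c tK) p.1 p.2 hpos
          rw [hfac']
          field_simp
    · -- incompatible cell: both domains empty
      push_neg at hb
      obtain ⟨k₀, hk₀t, hk₀⟩ := hb
      have hempty : ∀ u : ℕ, t ≤ u →
          (Apast A s c ∩ Aseg A s u c) ∩ cellOf L A t p = ∅ := by
        intro u hu
        ext ω
        simp only [Set.mem_inter_iff, Set.mem_empty_iff_false, iff_false, not_and]
        rintro ⟨h1, h2⟩ h3
        apply hk₀
        have hAc : A k₀ ω = c k₀ := by
          by_cases hks : (k₀ : ℕ) < s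
          · exact h1 k₀ hks
          · exact h2 k₀ (not_lt.1 hks) (hk₀t.trans_le hu)
        rw [← h3.2 k₀ hk₀t, hAc]
      refine ⟨?_, ?_, ?_⟩
      · rw [hempty (t+1) (Nat.le_succ t)]; exact integrableOn_empty
      · rw [hempty t le_rfl]; exact integrableOn_empty
      · rw [hempty (t+1) (Nat.le_succ t), hempty t le_rfl]
        simp
  -- assemble via partition
  rw [setIntegral_partition P (LReps 𝓛 K t) (cellOf L A t) _ hD1
      (fun p _ => measSet_cellOf hA hL t p) (cellOf_disjoint L A t)
      (fun ω _ => by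
        obtain ⟨p, hps, hmem⟩ := cellOf_cover L A t ω
        exact Set.mem_iUnion₂.2 ⟨p, hps, hmem⟩) _
      (fun p hp => (key p hp).1),
    setIntegral_partition P (LReps 𝓛 K t) (cellOf L A t) _ hD0
      (fun p _ => measSet_cellOf hA hL t p) (cellOf_disjoint L A t)
      (fun ω _ => by
        obtain ⟨p, hps, hmem⟩ := cellOf_cover L A t ω
        exact Set.mem_iUnion₂.2 ⟨p, hps, hmem⟩) _
      (fun p hp => (key p hp).2.1)]
  exact Finset.sum_congr rfl fun p hp => (key p hp).2.2

end Gcomp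
-- ============ full g-computation + chain rule ============
section Gcomp2
variable [MeasurableSpace 𝓛] [MeasurableSingletonClass 𝓛] [Fintype 𝓛] [Nonempty 𝓛]
variable (P : Measure Ω) [IsProbabilityMeasure P]
variable (A : Fin K → Ω → Bool) (L : Fin K → Ω → 𝓛)

theorem gcomp
    (hA : ∀ k, Measurable (A k)) (hL : ∀ k, Measurable (L k)) (hA3 : A3ok P A L)
    (X : Ω → ℝ) (hXi : Integrable X P)
    (hfac : ∀ (t : Fin K) (av : Bool) (l : Fin K → 𝓛) (b : Fin K → Bool),
      0 < P (Lpast L (t : ℕ) l ∩ Apast A (t : ℕ) b) →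
      ∫ ω in {ω | A t ω = av} ∩ (Lpast L (t : ℕ) l ∩ Apast A (t : ℕ) b), X ω ∂P
        = cP P {ω | A t ω = av} (Lpast L (t : ℕ) l ∩ Apast A (t : ℕ) b) *
          ∫ ω in Lpast L (t : ℕ) l ∩ Apast A (t : ℕ) b, X ω ∂P)
    (c : Fin K → Bool) (s : ℕ) (hsK : s ≤ K) :
    ∫ ω in Apast A s c ∩ Aseg A s K c, (∏ k ∈ filt K s K, (eD P A L k ω)⁻¹) * X ω ∂P
      = ∫ ω in Apast A s c, X ω ∂P := by
  have main : ∀ t, s ≤ t → t ≤ K →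
      ∫ ω in Apast A s c ∩ Aseg A s t c, (∏ k ∈ filt K s t, (eD P A L k ω)⁻¹) * X ω ∂P
        = ∫ ω in Apast A s c, X ω ∂P := by
    intro t
    induction t with
    | zero =>
      intro h1 _
      have hs0 : s = 0 := Nat.le_zero.1 h1
      subst hs0
      rw [Aseg_self, Set.inter_univ, filt_self]
      simp
    | succ n ih =>
      intro h1 h2
      rcases Nat.lt_or_ge n s with h | h
      · -- s = n + 1 : base case
        have hs : s = n + 1 := le_antisymm h1 h
        subst hs
        rw [Aseg_self, Set.inter_univ, filt_self]
        simp
      · rw [gcomp_step P A L hA hL hA3 X hXi hfac c s n h (Nat.lt_of_succ_le h2)]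
        exact ih h (Nat.le_of_succ_le h2)
  exact main K hsK le_rfl

lemma Apast_zero (b : Fin K → Bool) : Apast A 0 b = Set.univ := by
  ext ω; simp [Apast]

lemma mem_EtrV_full {ω : Ω} {c : Fin K → Bool} : ω ∈ EtrV A K c ↔ ∀ k, A k ω = c k := by
  simp [EtrV, Nat.sub_self]

lemma Apast_K_eq (c : Fin K → Bool) : Apast A K c = EtrV A K c := by
  ext ω
  simp only [Apast, Set.mem_setOf_eq, mem_EtrV_full]
  exact ⟨fun h k => h k k.isLt, fun h k _ => h k⟩

lemma EtrV_decomp (c : Fin K → Bool) (s : ℕ) :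
    EtrV A K c = Apast A s c ∩ Aseg A s K c := by
  ext ω
  simp only [mem_EtrV_full A, Set.mem_inter_iff, Apast, Aseg, Set.mem_setOf_eq]
  constructor
  · intro h; exact ⟨fun k _ => h k, fun k _ _ => h k⟩
  · rintro ⟨h1, h2⟩ k
    rcases Nat.lt_or_ge (k : ℕ) s with hk | hk
    · exact h1 k hk
    · exact h2 k hk k.isLt

lemma filt_topK (s : ℕ) : filt K s K = Finset.univ.filter (fun k : Fin K => s ≤ (k : ℕ)) := by
  ext k; simp only [filt, Finset.mem_filter, Finset.mem_univ, true_and]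
  exact ⟨fun h => h.1, fun h => ⟨h, k.isLt⟩⟩

lemma filt_univ : filt K 0 K = Finset.univ := by
  ext k; simp [filt, k.isLt]

-- chain rule: product of sequential conditional probabilities
lemma chain_rule (b : Fin K → Bool) : ∀ t, t ≤ K →
    ∏ k ∈ filt K 0 t, cP P {ω | A k ω = b k} (Apast A (k : ℕ) b)
      = (P (Apast A t b)).toReal := by
  intro t
  induction t with
  | zero =>
    intro _
    rw [filt_self, Apast_zero]
    simp
  | succ n ih =>
    intro h
    have hnK : n < K := h
    rw [filt_succ 0 (Nat.zero_le n) hnK, Finset.prod_insert (not_mem_filt 0 hnK),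
      ih (le_of_lt hnK)]
    have hset : {ω | A ⟨n, hnK⟩ ω = b ⟨n, hnK⟩} ∩ Apast A n b = Apast A (n + 1) b := by
      ext ω
      simp only [Set.mem_inter_iff, Set.mem_setOf_eq, Apast]
      constructor
      · rintro ⟨h1, h2⟩ k hk
        rcases Nat.lt_succ_iff_lt_or_eq.1 hk with hk' | hk'
        · exact h2 k hk'
        · have : k = ⟨n, hnK⟩ := Fin.ext hk'
          rw [this]; exact h1
      · intro hω
        exact ⟨hω ⟨n, hnK⟩ (Nat.lt_succ_self n), fun k hk => hω k (hk.trans (Nat.lt_succ_self n))⟩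
    rcases eq_or_lt_of_le (zero_le : 0 ≤ P (Apast A n b)) with hzero | hpos
    · have h1 : (P (Apast A n b)).toReal = 0 := by rw [← hzero]; simp
      have h2 : (P (Apast A (n + 1) b)).toReal = 0 := by
        have : P (Apast A (n + 1) b) = 0 := le_antisymm
          (by rw [hzero]
              exact measure_mono fun ω hω k hk => hω k (hk.trans (Nat.lt_succ_self n)))
          zero_le
        rw [this]; simp
      rw [h1, h2, mul_zero]
    · rw [cP, div_mul_cancel₀ _ (toReal_pos_of P hpos).ne', hset]

-- factorization hypotheses
lemma hfac_of_A2 (hA : ∀ k, Measurable (A k)) (hL : ∀ k, Measurable (L k))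
    (Ypot : (Fin K → Bool) → Ω → ℝ) (hYpm : ∀ a, Measurable (Ypot a))
    (hA2 : A2ok P A L Ypot) (a : Fin K → Bool) :
    ∀ (t : Fin K) (av : Bool) (l : Fin K → 𝓛) (b : Fin K → Bool),
      0 < P (Lpast L (t : ℕ) l ∩ Apast A (t : ℕ) b) →
      ∫ ω in {ω | A t ω = av} ∩ (Lpast L (t : ℕ) l ∩ Apast A (t : ℕ) b), Ypot a ω ∂P
        = cP P {ω | A t ω = av} (Lpast L (t : ℕ) l ∩ Apast A (t : ℕ) b) *
          ∫ ω in Lpast L (t : ℕ) l ∩ Apast A (t : ℕ) b, Ypot a ω ∂P := by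
  intro t av l b hpos
  exact integral_factor P (hYpm a)
    ((measSet_Lpast hL _ l).inter (measSet_Apast hA _ b)) hpos
    (fun B hB => hA2 t a B hB av l b hpos)

lemma hfac_one :
    ∀ (t : Fin K) (av : Bool) (l : Fin K → 𝓛) (b : Fin K → Bool),
      0 < P (Lpast L (t : ℕ) l ∩ Apast A (t : ℕ) b) →
      ∫ ω in {ω | A t ω = av} ∩ (Lpast L (t : ℕ) l ∩ Apast A (t : ℕ) b), (1 : ℝ) ∂P
        = cP P {ω | A t ω = av} (Lpast L (t : ℕ) l ∩ Apast A (t : ℕ) b) *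
          ∫ ω in Lpast L (t : ℕ) l ∩ Apast A (t : ℕ) b, (1 : ℝ) ∂P := by
  intro t av l b hpos
  rw [setIntegral_const, setIntegral_const, smul_eq_mul, smul_eq_mul, mul_one, mul_one, measureReal_def, measureReal_def, cP,
    div_mul_cancel₀ _ (toReal_pos_of P hpos).ne']

end Gcomp2
-- ============ partition of treatment arms ============
section Arms
variable [MeasurableSpace 𝓛] [MeasurableSingletonClass 𝓛] [Fintype 𝓛] [Nonempty 𝓛]
variable (P : Measure Ω) [IsProbabilityMeasure P]
variable (A : Fin K → Ω → Bool) (L : Fin K → Ω → 𝓛)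

/-- Full treatment sequences whose last `m` coordinates equal `a`. -/
def endsIn (K m : ℕ) (a : Bool) : Finset (Fin K → Bool) :=
  Finset.univ.filter fun c => ∀ k : Fin K, K - m ≤ (k : ℕ) → c k = a

lemma mem_endsIn {m : ℕ} {a : Bool} {c : Fin K → Bool} :
    c ∈ endsIn K m a ↔ ∀ k : Fin K, K - m ≤ (k : ℕ) → c k = a := by
  simp [endsIn]

lemma EtrV_subset_Etr {m : ℕ} {a : Bool} {c : Fin K → Bool} (hc : c ∈ endsIn K m a) :
    EtrV A K c ⊆ Etr A m a := by
  intro ω hω k hk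
  rw [(mem_EtrV_full A).1 hω k]
  exact (mem_endsIn.1 hc) k hk

lemma Etr_cover {m : ℕ} {a : Bool} :
    Etr A m a ⊆ ⋃ c ∈ endsIn K m a, EtrV A K c := by
  intro ω hω
  refine Set.mem_iUnion₂.2 ⟨fun k => A k ω, mem_endsIn.2 (fun k hk => hω k hk), ?_⟩
  exact (mem_EtrV_full A).2 fun k => rfl

lemma EtrV_pairwise_disjoint {s : Finset (Fin K → Bool)} :
    (↑s : Set (Fin K → Bool)).Pairwise (Function.onFun Disjoint (EtrV A K)) := by
  intro c _ c' _ hcc'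
  rw [Function.onFun, Set.disjoint_left]
  intro ω hω hω'
  exact hcc' (funext fun k => by rw [← (mem_EtrV_full A).1 hω k, (mem_EtrV_full A).1 hω' k])

lemma Apast_cover {m : ℕ} (a : Bool) :
    (Set.univ : Set Ω) ⊆ ⋃ c ∈ endsIn K m a, Apast A (K - m) c := by
  intro ω _
  refine Set.mem_iUnion₂.2 ⟨fun k => if K - m ≤ (k : ℕ) then a else A k ω, ?_, ?_⟩
  · exact mem_endsIn.2 fun k hk => by simp [hk]
  · intro k hk
    have : ¬(K - m ≤ (k : ℕ)) := by omega
    simp [this]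

lemma Apast_pairwise_disjoint {m : ℕ} {a : Bool} :
    (↑(endsIn K m a) : Set (Fin K → Bool)).Pairwise
      (Function.onFun Disjoint (Apast A (K - m))) := by
  intro c hc c' hc' hcc'
  rw [Finset.mem_coe, mem_endsIn] at hc hc'
  rw [Function.onFun, Set.disjoint_left]
  intro ω hω hω'
  refine hcc' (funext fun k => ?_)
  rcases Nat.lt_or_ge (k : ℕ) (K - m) with hk | hk
  · rw [← hω k hk, hω' k hk]
  · rw [hc k hk, hc' k hk]

-- pointwise identities for the weights on a full-history event
lemma Aseg_obs_eq {A : Fin K → Ω → Bool} {ω : Ω} {c : Fin K → Bool}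
    (hω : ∀ j, A j ω = c j) (s t : ℕ) :
    Aseg A s t (fun j => A j ω) = Aseg A s t c := by
  ext ω'
  simp only [Aseg, Set.mem_setOf_eq]
  exact forall_congr' fun j => forall_congr' fun _ => forall_congr' fun _ => by rw [hω j]

lemma Wsw_eq_on {c : Fin K → Bool} {ω : Ω} (hω : ω ∈ EtrV A K c) :
    Wsw P A L ω = (∏ k : Fin K, cP P {ω' | A k ω' = c k} (Apast A (k : ℕ) c)) *
      ∏ k ∈ filt K 0 K, (eD P A L k ω)⁻¹ := by
  have hfull : ∀ j, A j ω = c j := (mem_EtrV_full A).1 hω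
  have hωA : ω ∈ Apast A K c := fun k _ => hfull k
  have hnum : ∀ k : Fin K, cP P {ω' | A k ω' = A k ω} (Apast A (k : ℕ) (fun j => A j ω))
      = cP P {ω' | A k ω' = c k} (Apast A (k : ℕ) c) := by
    intro k
    rw [hfull k, Apast_obs_eq hωA (le_of_lt k.isLt)]
  calc Wsw P A L ω = ∏ k : Fin K,
        cP P {ω' | A k ω' = c k} (Apast A (k : ℕ) c) / eD P A L k ω := by
        rw [Wsw]
        exact Finset.prod_congr rfl fun k _ => by rw [← hnum k]; rfl
    _ = _ := by
        rw [Finset.prod_div_distrib, div_eq_mul_inv, ← Finset.prod_inv_distrib, filt_univ]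

lemma Wrsw_eq_on {m : ℕ} {a : Bool} {c : Fin K → Bool} (hc : c ∈ endsIn K m a) {ω : Ω}
    (hω : ω ∈ EtrV A K c) :
    Wrsw P A L m ω = (∏ k ∈ Finset.univ.filter (fun k : Fin K => K - m ≤ (k : ℕ)),
        cP P {ω' | A k ω' = a} (Aseg A (K - m) (k : ℕ) (fun _ => a))) *
      ∏ k ∈ filt K (K - m) K, (eD P A L k ω)⁻¹ := by
  have hfull : ∀ j, A j ω = c j := (mem_EtrV_full A).1 hω
  have hc' := mem_endsIn.1 hc
  have hseg : ∀ t : ℕ, Aseg A (K - m) t (fun j => A j ω) = Aseg A (K - m) t (fun _ => a) := by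
    intro t
    rw [Aseg_obs_eq hfull]
    ext ω'
    simp only [Aseg, Set.mem_setOf_eq]
    exact forall_congr' fun j => forall_congr' fun hj => forall_congr' fun _ => by
      rw [hc' j hj]
  calc Wrsw P A L m ω = ∏ k ∈ Finset.univ.filter (fun k : Fin K => K - m ≤ (k : ℕ)),
        cP P {ω' | A k ω' = a} (Aseg A (K - m) (k : ℕ) (fun _ => a)) / eD P A L k ω := by
        rw [Wrsw]
        refine Finset.prod_congr rfl fun k hk => ?_
        have hk' : K - m ≤ (k : ℕ) := (Finset.mem_filter.1 hk).2
        show cP P {ω' | A k ω' = A k ω} (Aseg A (K - m) (k : ℕ) (fun j => A j ω)) /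
            eD P A L k ω = _
        rw [show A k ω = a from (hfull k).trans (hc' k hk'), hseg (k : ℕ)]
    _ = _ := by
        rw [Finset.prod_div_distrib, div_eq_mul_inv, ← Finset.prod_inv_distrib, filt_topK]

end Arms
-- ============ integrability of weight products, arm integrals ============
section ArmInt
variable [MeasurableSpace 𝓛] [MeasurableSingletonClass 𝓛] [Fintype 𝓛] [Nonempty 𝓛]
variable (P : Measure Ω) [IsProbabilityMeasure P]
variable (A : Fin K → Ω → Bool) (L : Fin K → Ω → 𝓛)

/-- The observed history, as a map into a finite type. -/
def histF (A : Fin K → Ω → Bool) (L : Fin K → Ω → 𝓛) (ω : Ω) :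
    (Fin K → 𝓛) × (Fin K → Bool) := (fun j => L j ω, fun j => A j ω)

lemma integrable_comp_mul (hA : ∀ k, Measurable (A k)) (hL : ∀ k, Measurable (L k))
    (g : (Fin K → 𝓛) × (Fin K → Bool) → ℝ) (X : Ω → ℝ) (hXi : Integrable X P) :
    Integrable (fun ω => g (histF A L ω) * X ω) P := by
  have hH : Measurable (histF A L) :=
    Measurable.prod (measurable_pi_lambda _ fun j => hL j)
      (measurable_pi_lambda _ fun j => hA j)
  have hg : Measurable g := measurable_of_countable g
  refine hXi.bdd_mul (hg.comp hH).aestronglyMeasurable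
    (c := ∑ p : (Fin K → 𝓛) × (Fin K → Bool), |g p|) (Filter.Eventually.of_forall fun ω => ?_)
  exact Finset.single_le_sum (f := fun p => |g p|) (fun _ _ => abs_nonneg _)
    (Finset.mem_univ (histF A L ω))

lemma eD_comp (k : Fin K) : eD P A L k = (fun p : (Fin K → 𝓛) × (Fin K → Bool) =>
    cP P {ω' | A k ω' = p.2 k} (Lpast L (k : ℕ) p.1 ∩ Apast A (k : ℕ) p.2)) ∘ histF A L := rfl

lemma integrable_wprod_mul (hA : ∀ k, Measurable (A k)) (hL : ∀ k, Measurable (L k))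
    (s : ℕ) (X : Ω → ℝ) (hXi : Integrable X P) :
    Integrable (fun ω => (∏ k ∈ filt K s K, (eD P A L k ω)⁻¹) * X ω) P := by
  have := integrable_comp_mul P A L hA hL
    (fun p => ∏ k ∈ filt K s K,
      (cP P {ω' | A k ω' = p.2 k} (Lpast L (k : ℕ) p.1 ∩ Apast A (k : ℕ) p.2))⁻¹) X hXi
  exact this

/-- Generic computation of `∫_{Etr a} F` for a weight-type integrand `F`. -/
lemma int_Etr_W (hA : ∀ k, Measurable (A k)) (hL : ∀ k, Measurable (L k)) (hA3 : A3ok P A L)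
    (m : ℕ) (a : Bool) (s : ℕ) (hsK : s ≤ K)
    (F : Ω → ℝ) (Xc : (Fin K → Bool) → Ω → ℝ) (Cc : (Fin K → Bool) → ℝ)
    (hXi : ∀ c, Integrable (Xc c) P)
    (hfacX : ∀ c, ∀ (t : Fin K) (av : Bool) (l : Fin K → 𝓛) (b : Fin K → Bool),
      0 < P (Lpast L (t : ℕ) l ∩ Apast A (t : ℕ) b) →
      ∫ ω in {ω | A t ω = av} ∩ (Lpast L (t : ℕ) l ∩ Apast A (t : ℕ) b), Xc c ω ∂P
        = cP P {ω | A t ω = av} (Lpast L (t : ℕ) l ∩ Apast A (t : ℕ) b) *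
          ∫ ω in Lpast L (t : ℕ) l ∩ Apast A (t : ℕ) b, Xc c ω ∂P)
    (hF : ∀ c ∈ endsIn K m a, ∀ ω ∈ EtrV A K c,
      F ω = Cc c * ((∏ k ∈ filt K s K, (eD P A L k ω)⁻¹) * Xc c ω)) :
    ∫ ω in Etr A m a, F ω ∂P
      = ∑ c ∈ endsIn K m a, Cc c * ∫ ω in Apast A s c, Xc c ω ∂P := by
  have hint : ∀ c ∈ endsIn K m a, IntegrableOn F (Etr A m a ∩ EtrV A K c) P := by
    intro c hc
    rw [Set.inter_eq_self_of_subset_right (EtrV_subset_Etr A hc)]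
    exact (((integrable_wprod_mul P A L hA hL s (Xc c) (hXi c)).const_mul
      (Cc c)).integrableOn).congr_fun (fun ω hω => (hF c hc ω hω).symm) (measSet_EtrV hA K c)
  rw [setIntegral_partition P (endsIn K m a) (fun c => EtrV A K c) (Etr A m a)
    (measSet_Etr hA m a) (fun c _ => measSet_EtrV hA K c) (EtrV_pairwise_disjoint A)
    (Etr_cover A) F hint]
  refine Finset.sum_congr rfl fun c hc => ?_
  rw [Set.inter_eq_self_of_subset_right (EtrV_subset_Etr A hc),
    setIntegral_congr_fun (measSet_EtrV hA K c) (hF c hc), integral_const_mul,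
    EtrV_decomp A c s, gcomp P A L hA hL hA3 (Xc c) (hXi c) (hfacX c) c s hsK]

end ArmInt
-- ============ splice machinery, Γ, measure sums, A5 step ============
section Final
variable [MeasurableSpace 𝓛] [MeasurableSingletonClass 𝓛] [Fintype 𝓛] [Nonempty 𝓛]
variable (P : Measure Ω) [IsProbabilityMeasure P]
variable (A : Fin K → Ω → Bool) (L : Fin K → Ω → 𝓛)

def splice (K m : ℕ) (a : Bool) (c : Fin K → Bool) : Fin K → Bool :=
  fun k => if K - m ≤ (k : ℕ) then a else c k

def uconst (K m : ℕ) : Fin K → Bool := fun k => if K - m ≤ (k : ℕ) then true else false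

def vconst (K : ℕ) : Fin K → Bool := fun _ => false

lemma splice_eq_self {m : ℕ} {a : Bool} {c : Fin K → Bool} (hc : c ∈ endsIn K m a) :
    splice K m a c = c := by
  funext k
  rw [splice]
  split_ifs with h
  · exact ((mem_endsIn.1 hc) k h).symm
  · rfl

lemma splice_splice {m : ℕ} (a a' : Bool) (c : Fin K → Bool) :
    splice K m a (splice K m a' c) = splice K m a c := by
  funext k; rw [splice, splice, splice]; split_ifs <;> rfl

lemma splice_mem_endsIn {m : ℕ} (a : Bool) (c : Fin K → Bool) :
    splice K m a c ∈ endsIn K m a :=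
  mem_endsIn.2 fun k hk => by rw [splice]; simp [hk]

lemma Apast_splice {m : ℕ} (a : Bool) (c : Fin K → Bool) :
    Apast A (K - m) (splice K m a c) = Apast A (K - m) c := by
  ext ω
  simp only [Apast, Set.mem_setOf_eq]
  refine forall_congr' fun k => forall_congr' fun hk => ?_
  rw [splice, if_neg (by omega)]

/-- The restricted-weight numerator constant `Γ(a)`. -/
def Gamma (P : Measure Ω) (A : Fin K → Ω → Bool) (m : ℕ) (a : Bool) : ℝ :=
  ∏ k ∈ Finset.univ.filter (fun k : Fin K => K - m ≤ (k : ℕ)),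
    cP P {ω' | A k ω' = a} (Aseg A (K - m) (k : ℕ) (fun _ => a))

lemma Gamma_pos {m : ℕ} {a : Bool} (hpos : 0 < P (Etr A m a)) : 0 < Gamma P A m a := by
  refine Finset.prod_pos fun k hk => ?_
  have hk' : K - m ≤ (k : ℕ) := (Finset.mem_filter.1 hk).2
  have h1 : Etr A m a ⊆ {ω' | A k ω' = a} := fun ω hω => hω k hk'
  have h2 : Etr A m a ⊆ Aseg A (K - m) (k : ℕ) (fun _ => a) := fun ω hω j hj _ => hω j hj
  simp only [cP]
  apply div_pos
  · exact toReal_pos_of P (lt_of_lt_of_le hpos (measure_mono (Set.subset_inter h1 h2)))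
  · exact toReal_pos_of P (lt_of_lt_of_le hpos (measure_mono h2))

lemma sum_EtrV (hA : ∀ k, Measurable (A k)) (m : ℕ) (a : Bool) :
    ∑ c ∈ endsIn K m a, (P (EtrV A K c)).toReal = (P (Etr A m a)).toReal :=
  (measure_partition P (endsIn K m a) (fun c => EtrV A K c) (Etr A m a)
    (measSet_Etr hA m a) (fun c _ => measSet_EtrV hA K c) (EtrV_pairwise_disjoint A)
    (Etr_cover A) (fun c hc => EtrV_subset_Etr A hc)).symm

lemma sum_EtrV_ind (hA : ∀ k, Measurable (A k)) (m : ℕ) (a : Bool) (j : Fin K) :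
    ∑ c ∈ endsIn K m a, (P (EtrV A K c)).toReal * (if c (rev j) = true then (1 : ℝ) else 0)
      = (P ({ω | A (rev j) ω = true} ∩ Etr A m a)).toReal := by
  have h1 : ∀ c ∈ endsIn K m a,
      (P (EtrV A K c)).toReal * (if c (rev j) = true then (1 : ℝ) else 0)
        = if c (rev j) = true then (P (EtrV A K c)).toReal else 0 := by
    intro c _; split_ifs <;> simp
  rw [Finset.sum_congr rfl h1, ← Finset.sum_filter]
  refine (measure_partition P ((endsIn K m a).filter fun c => c (rev j) = true)
    (fun c => EtrV A K c) ({ω | A (rev j) ω = true} ∩ Etr A m a)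
    ((measSet_A hA (rev j) true).inter (measSet_Etr hA m a))
    (fun c _ => measSet_EtrV hA K c) (EtrV_pairwise_disjoint A) ?_ ?_).symm
  · rintro ω ⟨h1, h2⟩
    refine Set.mem_iUnion₂.2 ⟨fun k => A k ω, ?_, (mem_EtrV_full A).2 fun k => rfl⟩
    exact Finset.mem_filter.2 ⟨mem_endsIn.2 fun k hk => h2 k hk, h1⟩
  · intro c hc
    obtain ⟨hc1, hc2⟩ := Finset.mem_filter.1 hc
    intro ω hω
    exact ⟨by rw [Set.mem_setOf_eq, (mem_EtrV_full A).1 hω (rev j)]; exact hc2,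
      EtrV_subset_Etr A hc1 hω⟩

lemma sum_Apast_one (hA : ∀ k, Measurable (A k)) (m : ℕ) (a : Bool) :
    ∑ c ∈ endsIn K m a, (P (Apast A (K - m) c)).toReal = 1 := by
  have := measure_partition P (endsIn K m a) (fun c => Apast A (K - m) c) Set.univ
    MeasurableSet.univ (fun c _ => measSet_Apast hA _ c) (Apast_pairwise_disjoint A)
    (Apast_cover A a) (fun c _ => Set.subset_univ _)
  rw [measure_univ] at this
  simpa using this.symm

lemma A5step {m : ℕ} (hm1 : 1 ≤ m) (Ypot : (Fin K → Bool) → Ω → ℝ)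
    (hA5 : A5ok P A Ypot m) (c : Fin K → Bool) :
    (∫ ω in Apast A (K - m) c, Ypot (splice K m true c) ω ∂P)
      - ∫ ω in Apast A (K - m) c, Ypot (splice K m false c) ω ∂P
    = (∫ ω in Apast A (K - m) c, Ypot (uconst K m) ω ∂P)
      - ∫ ω in Apast A (K - m) c, Ypot (vconst K) ω ∂P := by
  rcases eq_or_lt_of_le (zero_le : 0 ≤ P (Apast A (K - m) c)) with hzero | hpos
  · have hz : ∀ a', ∫ ω in Apast A (K - m) c, Ypot a' ω ∂P = 0 := fun a' => by
      rw [Measure.restrict_eq_zero.mpr hzero.symm, integral_zero_measure]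
    rw [hz, hz, hz, hz]
  · obtain ⟨φ0, φ, hφ⟩ := hA5 c hpos
    have hPD : (0 : ℝ) < (P (Apast A (K - m) c)).toReal := toReal_pos_of P hpos
    have key : ∀ a', ∫ ω in Apast A (K - m) c, Ypot a' ω ∂P
        = (φ0 + ∑ j : Fin K, φ j * (if a' (rev j) = true then 1 else 0))
          * (P (Apast A (K - m) c)).toReal :=
      fun a' => (div_eq_iff hPD.ne').1 (hφ a')
    rw [key, key, key, key]
    have hterm : ∀ j : Fin K,
        (if splice K m true c (rev j) = true then (1 : ℝ) else 0)
          - (if splice K m false c (rev j) = true then 1 else 0)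
        = (if uconst K m (rev j) = true then (1 : ℝ) else 0)
          - (if vconst K (rev j) = true then 1 else 0) := by
      intro j
      by_cases hj : K - m ≤ ((rev j : Fin K) : ℕ) <;>
        simp [splice, uconst, vconst, hj]
    have hsum : (∑ j : Fin K, φ j * (if splice K m true c (rev j) = true then (1:ℝ) else 0))
        - ∑ j : Fin K, φ j * (if splice K m false c (rev j) = true then (1:ℝ) else 0)
        = (∑ j : Fin K, φ j * (if uconst K m (rev j) = true then (1:ℝ) else 0))
          - ∑ j : Fin K, φ j * (if vconst K (rev j) = true then (1:ℝ) else 0) := by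
      rw [← Finset.sum_sub_distrib, ← Finset.sum_sub_distrib]
      refine Finset.sum_congr rfl fun j _ => ?_
      rw [← mul_sub, ← mul_sub, hterm j]
    nlinarith [hsum, hPD]

lemma rsw_M {m : ℕ} (hm1 : 1 ≤ m) (hA : ∀ k, Measurable (A k))
    (Ypot : (Fin K → Bool) → Ω → ℝ) (hYpi : ∀ a, Integrable (Ypot a) P)
    (hA5 : A5ok P A Ypot m) :
    (∑ c ∈ endsIn K m true, ∫ ω in Apast A (K - m) c, Ypot c ω ∂P)
      - ∑ c ∈ endsIn K m false, ∫ ω in Apast A (K - m) c, Ypot c ω ∂P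
    = (∫ ω, Ypot (uconst K m) ω ∂P) - ∫ ω, Ypot (vconst K) ω ∂P := by
  have hsplice : ∀ (a : Bool), ∀ c ∈ endsIn K m a,
      ∫ ω in Apast A (K - m) c, Ypot c ω ∂P
        = ∫ ω in Apast A (K - m) c, Ypot (splice K m a c) ω ∂P := by
    intro a c hc; rw [splice_eq_self hc]
  have hre : (∑ c ∈ endsIn K m true, ∫ ω in Apast A (K - m) c, Ypot (splice K m true c) ω ∂P)
      = ∑ c ∈ endsIn K m false, ∫ ω in Apast A (K - m) c, Ypot (splice K m true c) ω ∂P := by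
    refine Finset.sum_nbij' (fun c => splice K m false c) (fun d => splice K m true d)
      (fun c _ => splice_mem_endsIn false c) (fun d _ => splice_mem_endsIn true d)
      (fun c hc => by rw [splice_splice, splice_eq_self hc])
      (fun d hd => by rw [splice_splice, splice_eq_self hd]) ?_
    intro c _
    rw [Apast_splice A false c, splice_splice]
  have hpart : ∀ a' : Fin K → Bool,
      ∑ c ∈ endsIn K m false, ∫ ω in Apast A (K - m) c, Ypot a' ω ∂P = ∫ ω, Ypot a' ω ∂P := by
    intro a'
    have := setIntegral_partition P (endsIn K m false) (fun c => Apast A (K - m) c) Set.univ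
      MeasurableSet.univ (fun c _ => measSet_Apast hA _ c) (Apast_pairwise_disjoint A)
      (Apast_cover A false) (Ypot a') (fun c _ => (hYpi a').integrableOn)
    simp only [Set.univ_inter, Measure.restrict_univ] at this
    exact this.symm
  calc (∑ c ∈ endsIn K m true, ∫ ω in Apast A (K - m) c, Ypot c ω ∂P)
      - ∑ c ∈ endsIn K m false, ∫ ω in Apast A (K - m) c, Ypot c ω ∂P
      = (∑ c ∈ endsIn K m false, ∫ ω in Apast A (K - m) c, Ypot (splice K m true c) ω ∂P)
        - ∑ c ∈ endsIn K m false, ∫ ω in Apast A (K - m) c, Ypot (splice K m false c) ω ∂P := by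
        rw [Finset.sum_congr rfl (hsplice true), Finset.sum_congr rfl (hsplice false), hre]
    _ = (∑ c ∈ endsIn K m false, ∫ ω in Apast A (K - m) c, Ypot (uconst K m) ω ∂P)
        - ∑ c ∈ endsIn K m false, ∫ ω in Apast A (K - m) c, Ypot (vconst K) ω ∂P := by
        rw [← Finset.sum_sub_distrib, ← Finset.sum_sub_distrib]
        exact Finset.sum_congr rfl fun c _ => A5step P A hm1 Ypot hA5 c
    _ = _ := by rw [hpart, hpart]

end Final
end

/-- Theorem 3 of the paper: `θ_sw^(m) − θ_rsw^(m) = Σ_{j=m+1}^K ψ_j q_j`. -/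
theorem theorem3
    {Ω : Type*} [MeasurableSpace Ω] {𝓛 : Type*} [MeasurableSpace 𝓛]
    [Fintype 𝓛] [Nonempty 𝓛] [MeasurableSingletonClass 𝓛]
    (P : Measure Ω) [IsProbabilityMeasure P]
    {K m : ℕ} (hK : 1 ≤ K) (hm1 : 1 ≤ m) (hmK : m ≤ K)
    (A : Fin K → Ω → Bool) (L : Fin K → Ω → 𝓛)
    (hA : ∀ k, Measurable (A k)) (hL : ∀ k, Measurable (L k))
    (Y : Ω → ℝ) (hY : Measurable Y)
    (Ypot : (Fin K → Bool) → Ω → ℝ)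
    (hYpm : ∀ a, Measurable (Ypot a)) (hYpi : ∀ a, Integrable (Ypot a) P)
    (hpos1 : 0 < P (Etr A m true)) (hpos0 : 0 < P (Etr A m false))
    (hA1 : A1ok A Y Ypot) (hA2 : A2ok P A L Ypot) (hA3 : A3ok P A L)
    (ψ0 : ℝ) (ψ : Fin K → ℝ) (hMSM : MSMeq P Ypot ψ0 ψ)
    (hA5 : A5ok P A Ypot m) :
    θW P A m (Wsw P A L) Y - θW P A m (Wrsw P A L m) Y =
      ∑ j ∈ Finset.univ.filter (fun j : Fin K => m ≤ (j : ℕ)), ψ j * qcoef P A m j := by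
  have hPD : ∀ a : Bool, 0 < P (Etr A m a) := fun a => by cases a <;> assumption
  have hPD' : ∀ a : Bool, (0 : ℝ) < (P (Etr A m a)).toReal := fun a => toReal_pos_of P (hPD a)
  -- four arm-level integral identities
  have hNsw : ∀ a : Bool, ∫ ω in Etr A m a, Wsw P A L ω * Y ω ∂P
      = ∑ c ∈ endsIn K m a, (P (EtrV A K c)).toReal * ∫ ω, Ypot c ω ∂P := by
    intro a
    have h := int_Etr_W P A L hA hL hA3 m a 0 (Nat.zero_le K)
      (fun ω => Wsw P A L ω * Y ω) (fun c => Ypot c)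
      (fun c => ∏ k : Fin K, cP P {ω' | A k ω' = c k} (Apast A (k : ℕ) c))
      hYpi (fun c => hfac_of_A2 P A L hA hL Ypot hYpm hA2 c)
      (fun c hc ω hω => by
        show Wsw P A L ω * Y ω = _
        rw [Wsw_eq_on P A L hω, hA1 c ω (fun k => (mem_EtrV_full A).1 hω k)]; ring)
    rw [h]
    refine Finset.sum_congr rfl fun c _ => ?_
    beta_reduce
    congr 1
    · rw [← filt_univ, chain_rule P A c K le_rfl, Apast_K_eq]
    · rw [Apast_zero, Measure.restrict_univ]
  have hDsw : ∀ a : Bool, ∫ ω in Etr A m a, Wsw P A L ω ∂P = (P (Etr A m a)).toReal := by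
    intro a
    have h := int_Etr_W P A L hA hL hA3 m a 0 (Nat.zero_le K)
      (fun ω => Wsw P A L ω) (fun _ _ => (1 : ℝ))
      (fun c => ∏ k : Fin K, cP P {ω' | A k ω' = c k} (Apast A (k : ℕ) c))
      (fun _ => integrable_const 1) (fun _ => hfac_one P A L)
      (fun c hc ω hω => by
        show Wsw P A L ω = _
        rw [Wsw_eq_on P A L hω, mul_one])
    rw [h, ← sum_EtrV P A hA m a]
    refine Finset.sum_congr rfl fun c _ => ?_
    beta_reduce
    rw [Apast_zero, Measure.restrict_univ]
    simp only [integral_const, measureReal_def, measure_univ, ENNReal.toReal_one, smul_eq_mul, mul_one]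
    rw [← filt_univ, chain_rule P A c K le_rfl, Apast_K_eq]
  have hNrsw : ∀ a : Bool, ∫ ω in Etr A m a, Wrsw P A L m ω * Y ω ∂P
      = Gamma P A m a * ∑ c ∈ endsIn K m a, ∫ ω in Apast A (K - m) c, Ypot c ω ∂P := by
    intro a
    have h := int_Etr_W P A L hA hL hA3 m a (K - m) (Nat.sub_le K m)
      (fun ω => Wrsw P A L m ω * Y ω) (fun c => Ypot c) (fun _ => Gamma P A m a)
      hYpi (fun c => hfac_of_A2 P A L hA hL Ypot hYpm hA2 c)
      (fun c hc ω hω => by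
        show Wrsw P A L m ω * Y ω = _
        simp only [Gamma]
        rw [Wrsw_eq_on P A L hc hω, hA1 c ω (fun k => (mem_EtrV_full A).1 hω k)]; ring)
    rw [h, Finset.mul_sum]
  have hDrsw : ∀ a : Bool, ∫ ω in Etr A m a, Wrsw P A L m ω ∂P = Gamma P A m a := by
    intro a
    have h := int_Etr_W P A L hA hL hA3 m a (K - m) (Nat.sub_le K m)
      (fun ω => Wrsw P A L m ω) (fun _ _ => (1 : ℝ)) (fun _ => Gamma P A m a)
      (fun _ => integrable_const 1) (fun _ => hfac_one P A L)
      (fun c hc ω hω => by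
        show Wrsw P A L m ω = _
        simp only [Gamma]
        rw [Wrsw_eq_on P A L hc hω, mul_one])
    rw [h]
    have h2 : ∀ c ∈ endsIn K m a,
        Gamma P A m a * ∫ ω in Apast A (K - m) c, (1 : ℝ) ∂P
          = Gamma P A m a * (P (Apast A (K - m) c)).toReal := by
      intro c _
      rw [setIntegral_const, smul_eq_mul, mul_one, measureReal_def]
    rw [Finset.sum_congr rfl h2, ← Finset.mul_sum, sum_Apast_one P A hA m a, mul_one]
  -- MSM algebra for the sw side
  have hcPmul : ∀ (a : Bool) (j : Fin K),
      cP P {ω | A (rev j) ω = true} (Etr A m a) * (P (Etr A m a)).toReal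
        = (P ({ω | A (rev j) ω = true} ∩ Etr A m a)).toReal := fun a j => by
    rw [cP, div_mul_cancel₀ _ (hPD' a).ne']
  have hNsw' : ∀ a : Bool, (∑ c ∈ endsIn K m a, (P (EtrV A K c)).toReal * ∫ ω, Ypot c ω ∂P)
      = (ψ0 + ∑ j : Fin K, ψ j * cP P {ω | A (rev j) ω = true} (Etr A m a))
        * (P (Etr A m a)).toReal := by
    intro a
    have step1 : (∑ c ∈ endsIn K m a, (P (EtrV A K c)).toReal * ∫ ω, Ypot c ω ∂P)
        = (∑ c ∈ endsIn K m a, (P (EtrV A K c)).toReal) * ψ0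
          + ∑ j : Fin K, ψ j * ∑ c ∈ endsIn K m a,
              (P (EtrV A K c)).toReal * (if c (rev j) = true then (1 : ℝ) else 0) := by
      calc ∑ c ∈ endsIn K m a, (P (EtrV A K c)).toReal * ∫ ω, Ypot c ω ∂P
          = ∑ c ∈ endsIn K m a, ((P (EtrV A K c)).toReal * ψ0
              + ∑ j : Fin K, ψ j *
                ((P (EtrV A K c)).toReal * (if c (rev j) = true then (1 : ℝ) else 0))) := by
            refine Finset.sum_congr rfl fun c _ => ?_
            rw [hMSM c, mul_add, Finset.mul_sum]
            congr 1
            exact Finset.sum_congr rfl fun j _ => by ring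
        _ = _ := by
            rw [Finset.sum_add_distrib, ← Finset.sum_mul, Finset.sum_comm]
            congr 1
            exact Finset.sum_congr rfl fun j _ => by rw [Finset.mul_sum]
    rw [step1, sum_EtrV P A hA m a]
    have h3 : ∀ j ∈ (Finset.univ : Finset (Fin K)),
        ψ j * (∑ c ∈ endsIn K m a,
            (P (EtrV A K c)).toReal * (if c (rev j) = true then (1 : ℝ) else 0))
          = ψ j * cP P {ω | A (rev j) ω = true} (Etr A m a) * (P (Etr A m a)).toReal := by
      intro j _
      rw [sum_EtrV_ind P A hA m a j, ← hcPmul a j]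
      ring
    rw [Finset.sum_congr rfl h3, ← Finset.sum_mul]
    ring
  -- the two contrasts
  have hθsw : θW P A m (Wsw P A L) Y = ∑ j : Fin K, ψ j * qcoef P A m j := by
    rw [θW, hNsw true, hNsw false, hDsw true, hDsw false, hNsw' true, hNsw' false,
      mul_div_cancel_right₀ _ (hPD' true).ne', mul_div_cancel_right₀ _ (hPD' false).ne']
    simp only [qcoef, mul_sub]
    rw [Finset.sum_sub_distrib]
    ring
  have hθrsw : θW P A m (Wrsw P A L m) Y
      = ∑ j : Fin K, ψ j * (if uconst K m (rev j) = true then (1 : ℝ) else 0) := by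
    rw [θW, hNrsw true, hNrsw false, hDrsw true, hDrsw false,
      mul_div_cancel_left₀ _ (Gamma_pos P A hpos1).ne',
      mul_div_cancel_left₀ _ (Gamma_pos P A hpos0).ne',
      rsw_M P A hm1 hA Ypot hYpi hA5, hMSM (uconst K m), hMSM (vconst K)]
    simp only [vconst]
    simp
  -- final algebra
  have hind0 : ∀ j : Fin K, m ≤ (j : ℕ) →
      (if uconst K m (rev j) = true then (1 : ℝ) else 0) = 0 := by
    intro j hj
    have hjK := j.isLt
    have h : ¬(K - m ≤ K - 1 - (j : ℕ)) := by omega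
    simp [uconst, rev, h]
  have hind1 : ∀ j : Fin K, ¬(m ≤ (j : ℕ)) →
      (if uconst K m (rev j) = true then (1 : ℝ) else 0) = 1 := by
    intro j hj
    have hjK := j.isLt
    have h : K - m ≤ K - 1 - (j : ℕ) := by omega
    simp [uconst, rev, h]
  have hq1 : ∀ j : Fin K, ¬(m ≤ (j : ℕ)) → qcoef P A m j = 1 := by
    intro j hj
    have hjK := j.isLt
    have hrev : K - m ≤ ((rev j : Fin K) : ℕ) := by
      show K - m ≤ K - 1 - (j : ℕ); omega
    have hsub : Etr A m true ⊆ {ω | A (rev j) ω = true} := fun ω hω => hω (rev j) hrev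
    have hdis : {ω | A (rev j) ω = true} ∩ Etr A m false = ∅ := by
      rw [Set.eq_empty_iff_forall_notMem]
      rintro ω ⟨h1, h2⟩
      have h3 := h2 (rev j) hrev
      rw [Set.mem_setOf_eq] at h1
      rw [h1] at h3
      simp at h3
    rw [qcoef, cP_of_subset P hsub hpos1, cP_of_disjoint P hdis, sub_zero]
  rw [hθsw, hθrsw, ← Finset.sum_sub_distrib,
    ← Finset.sum_filter_add_sum_filter_not Finset.univ (fun j : Fin K => m ≤ (j : ℕ))
      (fun j => ψ j * qcoef P A m j
        - ψ j * (if uconst K m (rev j) = true then (1 : ℝ) else 0))]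
  have e1 : ∑ j ∈ Finset.univ.filter (fun j : Fin K => m ≤ (j : ℕ)),
      (ψ j * qcoef P A m j - ψ j * (if uconst K m (rev j) = true then (1 : ℝ) else 0))
      = ∑ j ∈ Finset.univ.filter (fun j : Fin K => m ≤ (j : ℕ)), ψ j * qcoef P A m j := by
    refine Finset.sum_congr rfl fun j hj => ?_
    rw [hind0 j (Finset.mem_filter.1 hj).2, mul_zero, sub_zero]
  have e2 : ∑ j ∈ Finset.univ.filter (fun j : Fin K => ¬ m ≤ (j : ℕ)),
      (ψ j * qcoef P A m j - ψ j * (if uconst K m (rev j) = true then (1 : ℝ) else 0))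
      = 0 := by
    refine Finset.sum_eq_zero fun j hj => ?_
    rw [hq1 j (Finset.mem_filter.1 hj).2, hind1 j (Finset.mem_filter.1 hj).2,
      mul_one, sub_self]
  rw [e1, e2, add_zero]

end MSMPaper
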